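/- Under the same setup, the market maker's expected profit on the real flow satisfies E[(p − v)·(x + u)] = −σv·σε²/(2√(σu² + σε²)), which is strictly negative whenever σε > 0 and zero when σε = 0. -/

import Mathlib

open MeasureTheory ProbabilityTheory

section KyleHelpers
open Real Set
open scoped NNReal ENNReal


lemma sq_exp_int {b : ℝ} (hb : 0 < b) :
    ∫ x : ℝ, x ^ 2 * Real.exp (-b * x ^ 2) = Real.sqrt π / (2 * b ^ ((3:ℝ)/2)) := by
  have h1 : ∫ x : ℝ, x ^ 2 * Real.exp (-b * x ^ 2)
      = ∫ x : ℝ, |x| ^ 2 * Real.exp (-b * |x| ^ 2) := by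
    congr 1; ext x; rw [sq_abs]
  rw [h1, integral_comp_abs (f := fun x => x ^ 2 * Real.exp (-b * x ^ 2))]
  have h2 : ∫ x in Ioi (0:ℝ), x ^ 2 * Real.exp (-b * x ^ 2)
      = ∫ x in Ioi (0:ℝ), x ^ ((2:ℝ)) * Real.exp (-b * x ^ ((2:ℝ))) := by
    refine setIntegral_congr_fun measurableSet_Ioi (fun x hx => ?_)
    rw [← Real.rpow_natCast x 2]; norm_num
  rw [h2, integral_rpow_mul_exp_neg_mul_rpow (by norm_num) (by norm_num) hb]
  have h3 : ((2:ℝ) + 1) / 2 = 1/2 + 1 := by norm_num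
  rw [h3, Real.Gamma_add_one (by norm_num), Real.Gamma_one_half_eq]
  rw [show -((2:ℝ)+1)/2 = -(3/2) by norm_num, Real.rpow_neg hb.le]
  rw [Real.sqrt_eq_rpow]
  field_simp

lemma gauss_integral_eq (μ : ℝ) {v : ℝ≥0} (hv : v ≠ 0) (g : ℝ → ℝ) :
    ∫ x, g x ∂(gaussianReal μ v) = ∫ x, gaussianPDFReal μ v x * g x := by
  rw [gaussianReal_of_var_ne_zero _ hv]
  have h : (gaussianPDF μ v) = fun x => ((gaussianPDFReal μ v x).toNNReal : ℝ≥0∞) := rfl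
  rw [h, integral_withDensity_eq_integral_smul
    ((measurable_gaussianPDFReal μ v).real_toNNReal)]
  congr 1; ext x
  simp [NNReal.smul_def, Real.coe_toNNReal _ (gaussianPDFReal_nonneg μ v x)]

lemma gauss_pdf_eq {v : ℝ≥0} (hv : v ≠ 0) (x : ℝ) :
    gaussianPDFReal 0 v x = (Real.sqrt (2 * π * v))⁻¹ * Real.exp (-((2:ℝ)*v)⁻¹ * x ^ 2) := by
  have hv' : (0:ℝ) < (v:ℝ) := by positivity
  rw [gaussianPDFReal]
  congr 1
  rw [sub_zero]
  field_simp

lemma gauss_integrable_pow (v : ℝ≥0) (n : ℕ) :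
    Integrable (fun x : ℝ => x ^ n) (gaussianReal 0 v) := by
  by_cases hv : v = 0
  · simp only [hv, gaussianReal_zero_var]
    exact (integrable_const ((0:ℝ) ^ n)).congr (ae_eq_dirac (fun x : ℝ => x ^ n)).symm
  · rw [gaussianReal_of_var_ne_zero _ hv]
    have h : (gaussianPDF 0 v) = fun x => ((gaussianPDFReal 0 v x).toNNReal : ℝ≥0∞) := rfl
    rw [h, integrable_withDensity_iff_integrable_smul
      ((measurable_gaussianPDFReal 0 v).real_toNNReal)]
    have hv' : (0:ℝ) < (v:ℝ) := by positivity
    have hb : (0:ℝ) < ((2:ℝ) * v)⁻¹ := by positivity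
    have key : Integrable (fun x : ℝ => x ^ (n:ℝ) * Real.exp (-((2:ℝ)*v)⁻¹ * x ^ 2)) :=
      integrable_rpow_mul_exp_neg_mul_sq hb (by exact_mod_cast neg_one_lt_zero.trans_le (Nat.cast_nonneg n))
    have key2 : Integrable (fun x : ℝ => x ^ n * Real.exp (-((2:ℝ)*v)⁻¹ * x ^ 2)) := by
      convert key using 2 with x
      rw [Real.rpow_natCast]
    refine (key2.const_mul ((Real.sqrt (2 * π * v))⁻¹)).congr
      (Filter.Eventually.of_forall fun x => ?_)
    have hc : ((gaussianPDFReal 0 v x).toNNReal : ℝ) = gaussianPDFReal 0 v x :=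
      Real.coe_toNNReal _ (gaussianPDFReal_nonneg 0 v x)
    show _ = (gaussianPDFReal 0 v x).toNNReal • x ^ n
    rw [NNReal.smul_def, smul_eq_mul, hc, gauss_pdf_eq hv]
    ring

lemma gauss_mean_zero (v : ℝ≥0) : ∫ x, x ∂(gaussianReal 0 v) = 0 := by
  have hmap : (gaussianReal 0 v).map (fun x => (-1 : ℝ) * x) = gaussianReal 0 v := by
    rw [show (fun x => (-1:ℝ) * x) = ((-1:ℝ) * ·) from rfl, gaussianReal_map_const_mul (-1)]
    congr 1
    · norm_num
    · ext : 1
      push_cast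
      norm_num
  have h1 : ∫ x, x ∂(gaussianReal 0 v) = ∫ x, (-1 : ℝ) * x ∂(gaussianReal 0 v) := by
    conv_lhs => rw [← hmap]
    rw [integral_map (f := fun x : ℝ => x) (measurable_const_mul (-1)).aemeasurable
      measurable_id.aestronglyMeasurable]
  have h2 : ∫ x, (-1 : ℝ) * x ∂(gaussianReal 0 v) = -∫ x, x ∂(gaussianReal 0 v) := by
    simp only [neg_one_mul]
    exact integral_neg _
  linarith [h2 ▸ h1]

lemma gauss_sq (v : ℝ≥0) : ∫ x, x ^ 2 ∂(gaussianReal 0 v) = (v : ℝ) := by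
  by_cases hv : v = 0
  · simp [hv, gaussianReal_zero_var, integral_dirac]
  · have ht : (0:ℝ) < (v:ℝ) := by positivity
    have hb : (0:ℝ) < ((2:ℝ)*v)⁻¹ := by positivity
    rw [gauss_integral_eq 0 hv]
    have h1 : ∀ x : ℝ, gaussianPDFReal 0 v x * x ^ 2
        = (Real.sqrt (2 * π * v))⁻¹ * (x ^ 2 * Real.exp (-((2:ℝ)*v)⁻¹ * x ^ 2)) := by
      intro x; rw [gauss_pdf_eq hv]; ring
    simp_rw [h1]
    rw [integral_const_mul, sq_exp_int hb]
    set t := (v:ℝ) with htdef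
    have h2t : (0:ℝ) < 2 * t := by linarith
    have hA : (((2:ℝ)*t)⁻¹ : ℝ) ^ ((3:ℝ)/2) = ((2*t) ^ ((3:ℝ)/2))⁻¹ :=
      Real.inv_rpow h2t.le _
    have hB : ((2*t) : ℝ) ^ ((3:ℝ)/2) = (2*t) * Real.sqrt (2*t) := by
      rw [show ((3:ℝ)/2) = 1 + 1/2 by norm_num, Real.rpow_add h2t, Real.rpow_one,
        ← Real.sqrt_eq_rpow]
    have hC : Real.sqrt (2 * π * t) = Real.sqrt π * Real.sqrt (2*t) := by
      rw [← Real.sqrt_mul (le_of_lt Real.pi_pos)]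
      congr 1; ring
    have hsp : (0:ℝ) < Real.sqrt π := Real.sqrt_pos.mpr Real.pi_pos
    have hst : (0:ℝ) < Real.sqrt (2*t) := Real.sqrt_pos.mpr h2t
    rw [hA, hB, hC]
    field_simp

variable {Ω : Type*} [MeasurableSpace Ω] {P : Measure Ω} [IsProbabilityMeasure P]

lemma aemeas_of_map_gauss {f : Ω → ℝ} {μ0 : ℝ} {w : ℝ≥0}
    (h : P.map f = gaussianReal μ0 w) : AEMeasurable f P := by
  by_contra hc
  rw [Measure.map_of_not_aemeasurable hc] at h
  have h1 := congrArg (fun m : Measure ℝ => m Set.univ) h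
  simp at h1
lemma map_center {f : Ω → ℝ} {μ0 : ℝ} {w : ℝ≥0}
    (h : P.map f = gaussianReal μ0 w) :
    P.map (fun ω => f ω - μ0) = gaussianReal 0 w := by
  have hf := aemeas_of_map_gauss h
  have : (fun ω => f ω - μ0) = (· + (-μ0)) ∘ f := by ext ω; simp [sub_eq_add_neg]
  rw [this, ← AEMeasurable.map_map_of_aemeasurable (by fun_prop) hf, h,
    gaussianReal_map_add_const (-μ0)]
  norm_num
end KyleHelpers

section KyleHelpers2
open scoped NNReal ENNReal

variable {Ω : Type*} [MeasurableSpace Ω] {P : Measure Ω} [IsProbabilityMeasure P]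

lemma integrable_of_map_gauss {f : Ω → ℝ} {w : ℝ≥0}
    (h : P.map f = gaussianReal 0 w) : Integrable f P := by
  have hf := aemeas_of_map_gauss h
  have h1 : Integrable (fun x : ℝ => x) (P.map f) := by
    rw [h]
    simpa [pow_one] using gauss_integrable_pow w 1
  exact (integrable_map_measure measurable_id.aestronglyMeasurable hf).mp h1

lemma integrable_sq_of_map_gauss {f : Ω → ℝ} {w : ℝ≥0}
    (h : P.map f = gaussianReal 0 w) : Integrable (fun ω => f ω * f ω) P := by
  have hf := aemeas_of_map_gauss h
  have h1 : Integrable (fun x : ℝ => x ^ 2) (P.map f) := h.symm ▸ gauss_integrable_pow w 2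
  have := (integrable_map_measure (measurable_id.pow_const 2).aestronglyMeasurable hf).mp h1
  simpa [Function.comp_def, sq] using this

lemma mean_of_map_gauss {f : Ω → ℝ} {w : ℝ≥0}
    (h : P.map f = gaussianReal 0 w) : ∫ ω, f ω ∂P = 0 := by
  have hf := aemeas_of_map_gauss h
  have := integral_map (f := fun x : ℝ => x) hf measurable_id.aestronglyMeasurable
  rw [h, gauss_mean_zero] at this
  exact this.symm

lemma sq_of_map_gauss {f : Ω → ℝ} {w : ℝ≥0}
    (h : P.map f = gaussianReal 0 w) : ∫ ω, f ω * f ω ∂P = (w : ℝ) := by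
  have hf := aemeas_of_map_gauss h
  have := integral_map (f := fun x : ℝ => x ^ 2) hf
    (measurable_id.pow_const 2).aestronglyMeasurable
  rw [h, gauss_sq] at this
  simp only [sq] at this
  exact this.symm

end KyleHelpers2


/-- Market maker's expected profit on the real flow (the negative privacy subsidy) in the Kyle model with
Gaussian privacy noise. -/
theorem stmt_6 {Ω : Type*} [MeasurableSpace Ω] (P : Measure Ω) [IsProbabilityMeasure P]
    (v u ε : Ω → ℝ) (p₀ σv σu σε : ℝ) (hv : 0 < σv) (hu : 0 < σu) (he : 0 ≤ σε)
    (hvd : P.map v = gaussianReal p₀ ⟨σv ^ 2, by positivity⟩)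
    (hud : P.map u = gaussianReal 0 ⟨σu ^ 2, by positivity⟩)
    (hed : P.map ε = gaussianReal 0 ⟨σε ^ 2, by positivity⟩)
    (hindep : iIndepFun ![v, u, ε] P)
    (β lam : ℝ)
    (hβ : β = Real.sqrt (σu ^ 2 + σε ^ 2) / σv)
    (hlam : lam = σv / (2 * Real.sqrt (σu ^ 2 + σε ^ 2)))
    (x p : Ω → ℝ)
    (hx : ∀ ω, x ω = β * (v ω - p₀))
    (hp : ∀ ω, p ω = p₀ + lam * (x ω + u ω + ε ω)) :
    ∫ ω, (p ω - v ω) * (x ω + u ω) ∂P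
      = -(σv * σε ^ 2 / (2 * Real.sqrt (σu ^ 2 + σε ^ 2))) ∧
    (0 < σε → ∫ ω, (p ω - v ω) * (x ω + u ω) ∂P < 0) ∧
    (σε = 0 → ∫ ω, (p ω - v ω) * (x ω + u ω) ∂P = 0) := by
  set s := Real.sqrt (σu ^ 2 + σε ^ 2) with hs_def
  have hs : 0 < s := Real.sqrt_pos.mpr (by positivity)
  have hs2 : s ^ 2 = σu ^ 2 + σε ^ 2 := Real.sq_sqrt (by positivity)
  set V : Ω → ℝ := fun ω => v ω - p₀ with hV_def
  -- distributions
  have hVd : P.map V = gaussianReal 0 ⟨σv ^ 2, by positivity⟩ := map_center hvd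
  -- integrability
  have intV : Integrable V P := integrable_of_map_gauss hVd
  have intu : Integrable u P := integrable_of_map_gauss hud
  have inte : Integrable ε P := integrable_of_map_gauss hed
  have intVV : Integrable (fun ω => V ω * V ω) P := integrable_sq_of_map_gauss hVd
  have intuu : Integrable (fun ω => u ω * u ω) P := integrable_sq_of_map_gauss hud
  -- independence
  have hvu : IndepFun v u P := hindep.indepFun (show (0 : Fin 3) ≠ 1 by decide)
  have hve : IndepFun v ε P := hindep.indepFun (show (0 : Fin 3) ≠ 2 by decide)
  have hue : IndepFun u ε P := hindep.indepFun (show (1 : Fin 3) ≠ 2 by decide)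
  have hVu : IndepFun V u P := hvu.comp (measurable_id.sub_const p₀) measurable_id
  have hVe : IndepFun V ε P := hve.comp (measurable_id.sub_const p₀) measurable_id
  have intVu : Integrable (fun ω => V ω * u ω) P := hVu.integrable_mul intV intu
  have inteV : Integrable (fun ω => ε ω * V ω) P := (hVe.symm).integrable_mul inte intV
  have inteu : Integrable (fun ω => ε ω * u ω) P := (hue.symm).integrable_mul inte intu
  -- moments
  have mV : ∫ ω, V ω ∂P = 0 := mean_of_map_gauss hVd
  have mu : ∫ ω, u ω ∂P = 0 := mean_of_map_gauss hud
  have me : ∫ ω, ε ω ∂P = 0 := mean_of_map_gauss hed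
  have mVV : ∫ ω, V ω * V ω ∂P = σv ^ 2 := sq_of_map_gauss hVd
  have muu : ∫ ω, u ω * u ω ∂P = σu ^ 2 := sq_of_map_gauss hud
  have mVu : ∫ ω, V ω * u ω ∂P = 0 := by
    have h := hVu.integral_fun_mul_eq_mul_integral intV.aestronglyMeasurable intu.aestronglyMeasurable
    rw [mV, zero_mul] at h
    exact h
  have meV : ∫ ω, ε ω * V ω ∂P = 0 := by
    have h := (hVe.symm).integral_fun_mul_eq_mul_integral inte.aestronglyMeasurable intV.aestronglyMeasurable
    rw [me, zero_mul] at h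
    exact h
  have meu : ∫ ω, ε ω * u ω ∂P = 0 := by
    have h := (hue.symm).integral_fun_mul_eq_mul_integral inte.aestronglyMeasurable intu.aestronglyMeasurable
    rw [me, zero_mul] at h
    exact h
  -- expand
  set A := (lam * β - 1) * β with hA
  set B := (lam * β - 1) + lam * β with hB
  have hexpand : ∀ ω, (p ω - v ω) * (x ω + u ω)
      = A * (V ω * V ω) + B * (V ω * u ω) + lam * (u ω * u ω)
        + (lam * β) * (ε ω * V ω) + lam * (ε ω * u ω) := by
    intro ω
    rw [hp ω, hx ω]
    simp only [hV_def, hA, hB]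
    ring
  have key : ∫ ω, (p ω - v ω) * (x ω + u ω) ∂P
      = A * σv ^ 2 + lam * σu ^ 2 := by
    calc ∫ ω, (p ω - v ω) * (x ω + u ω) ∂P
        = ∫ ω, (A * (V ω * V ω) + B * (V ω * u ω) + lam * (u ω * u ω)
            + (lam * β) * (ε ω * V ω) + lam * (ε ω * u ω)) ∂P := by
          exact integral_congr_ae (Filter.Eventually.of_forall fun ω => hexpand ω)
      _ = A * σv ^ 2 + lam * σu ^ 2 := by
          have i2 : Integrable (fun ω => A * (V ω * V ω) + B * (V ω * u ω)) P :=
            (intVV.const_mul A).add (intVu.const_mul B)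
          have i3 : Integrable (fun ω => A * (V ω * V ω) + B * (V ω * u ω)
              + lam * (u ω * u ω)) P := i2.add (intuu.const_mul lam)
          have i4 : Integrable (fun ω => A * (V ω * V ω) + B * (V ω * u ω)
              + lam * (u ω * u ω) + (lam * β) * (ε ω * V ω)) P :=
            i3.add (inteV.const_mul (lam * β))
          rw [integral_add i4 (inteu.const_mul lam), integral_add i3 (inteV.const_mul (lam * β)),
            integral_add i2 (intuu.const_mul lam),
            integral_add (intVV.const_mul A) (intVu.const_mul B)]
          simp only [integral_const_mul]
          rw [mVV, muu, mVu, meV, meu]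
          ring
  have hval : A * σv ^ 2 + lam * σu ^ 2 = -(σv * σε ^ 2 / (2 * s)) := by
    have hσu : σu ^ 2 = s ^ 2 - σε ^ 2 := by linarith
    rw [hA, hβ, hlam, hσu]
    have hσv : σv ≠ 0 := hv.ne'
    have hsne : s ≠ 0 := hs.ne'
    field_simp
    ring
  rw [key, hval]
  refine ⟨rfl, fun hε => ?_, fun hε => ?_⟩
  · have : 0 < σv * σε ^ 2 / (2 * s) := by positivity
    linarith
  · simp [hε]
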